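/- Let b, c, ν, ρ ∈ ℂ with Re(ρ) > 0, Re(c) > 1 and Re(ν) > 0, and for μ ∈ ℂ write f_μ(x) = G_μ^{(b,c-1)}(x;ρ) for real x > 0. Then for every real x > 0, (2-ν) · f_{ν-1}'(x) + x · ( f_{ν-1}''(x) + b · f_{ν+1}''(x) ) = -b(ν+2) · f_{ν+1}'(x), where the derivatives are with respect to the real variable x. -/

import Mathlib

open Complex MeasureTheory Real Set

/-- Extended Gamma function `Γ_ρ(x) = ∫_0^∞ t^(x-1) e^(-t-ρ/t) dt`. -/
noncomputable def extGamma (ρ x : ℂ) : ℂ :=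
  ∫ t in Ioi (0:ℝ), (t:ℂ) ^ (x - 1) * Complex.exp (-(t:ℂ) - ρ / (t:ℂ))

/-- Generalized Pochhammer symbol `(c;ρ)_μ = Γ_ρ(c+μ)/Γ(c)`. -/
noncomputable def genPoch (c ρ μ : ℂ) : ℂ := extGamma ρ (c + μ) / Complex.Gamma c

/-- Unified four parameter Bessel function `G_ν^{(b,c)}(z;ρ)` with complex order,
powers being principal complex powers. -/
noncomputable def unifiedG (b c ν ρ z : ℂ) : ℂ :=
  ∑' k : ℕ, (-b) ^ k * genPoch c ρ (2 * (k:ℂ) + ν) * (z / 2) ^ (2 * (k:ℂ) + ν) /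
    ((k.factorial : ℂ) * Complex.Gamma (ν + (k:ℂ) + 1) * Complex.Gamma (ν + 2 * (k:ℂ) + 1))

/-- Unified four parameter Bessel function with integer order, powers being integer powers. -/
noncomputable def unifiedGInt (b c ρ : ℂ) (ν : ℤ) (z : ℂ) : ℂ :=
  ∑' k : ℕ, (-b) ^ k * genPoch c ρ (2 * (k:ℂ) + (ν:ℂ)) * (z / 2) ^ (2 * (k:ℤ) + ν) /
    ((k.factorial : ℂ) * Complex.Gamma ((ν:ℂ) + (k:ℂ) + 1) * Complex.Gamma ((ν:ℂ) + 2 * (k:ℂ) + 1))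

/-- Pochhammer symbol `(a)_k = Γ(a+k)/Γ(a)`. -/
noncomputable def poch (a : ℂ) (k : ℕ) : ℂ := Complex.Gamma (a + (k:ℂ)) / Complex.Gamma a

/-- Generalized hypergeometric function `₀F₃`. -/
noncomputable def hyp0F3 (a₁ a₂ a₃ w : ℂ) : ℂ :=
  ∑' k : ℕ, w ^ k / (poch a₁ k * poch a₂ k * poch a₃ k * (k.factorial : ℂ))

/-- Generalized hypergeometric function `₂F₃`. -/
noncomputable def hyp2F3 (a₁ a₂ b₁ b₂ b₃ w : ℂ) : ℂ :=
  ∑' k : ℕ, poch a₁ k * poch a₂ k * w ^ k /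
    (poch b₁ k * poch b₂ k * poch b₃ k * (k.factorial : ℂ))

/-- Bessel function of the first kind `J_μ(z)` for real `z > 0`. -/
noncomputable def besselJ (μ : ℂ) (z : ℝ) : ℂ :=
  ∑' k : ℕ, (-1) ^ k * ((z:ℂ) / 2) ^ (2 * (k:ℂ) + μ) /
    ((k.factorial : ℂ) * Complex.Gamma (μ + (k:ℂ) + 1))

/-- Generalized four parameter spherical Bessel function
`g_ν^{(b,c)}(z;ρ) = √(π/(2z)) · G_{ν+1/2}^{(b,c-1/2)}(z;ρ)`. -/
noncomputable def sphG (b c ν ρ : ℂ) (z : ℝ) : ℂ :=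
  (Real.sqrt (π / (2 * z)) : ℂ) * unifiedG b (c - 1/2) (ν + 1/2) ρ (z:ℂ)

/-- Generalized four parameter Bessel-Clifford function
`C_ν^{(b,λ)}(z;ρ) = z^{-ν/2} · G_ν^{(b,λ)}(2√z;ρ)` for real `z > 0`. -/
noncomputable def cliffC (b lam ν ρ : ℂ) (z : ℝ) : ℂ :=
  (z:ℂ) ^ (-ν / 2) * unifiedG b lam ν ρ ((2 * Real.sqrt z : ℝ) : ℂ)


lemma extGamma_norm_le {ρ : ℂ} (hρ : 0 ≤ ρ.re) {w : ℂ} (hw : 0 < w.re) :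
    ‖extGamma ρ w‖ ≤ Real.Gamma w.re := by
  rw [extGamma]
  calc ‖∫ t in Ioi (0:ℝ), (t:ℂ) ^ (w - 1) * Complex.exp (-(t:ℂ) - ρ / (t:ℂ))‖
      ≤ ∫ t in Ioi (0:ℝ), ‖(t:ℂ) ^ (w - 1) * Complex.exp (-(t:ℂ) - ρ / (t:ℂ))‖ :=
        norm_integral_le_integral_norm _
    _ ≤ ∫ t in Ioi (0:ℝ), Real.exp (-t) * t ^ (w.re - 1) := by
        apply integral_mono_of_nonneg
        · filter_upwards with t using norm_nonneg _
        · exact Real.GammaIntegral_convergent hw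
        · filter_upwards [ae_restrict_mem measurableSet_Ioi] with t ht
          have ht' : (0:ℝ) < t := ht
          rw [norm_mul,
            Complex.norm_cpow_eq_rpow_re_of_pos ht', Complex.norm_exp]
          have hre : (-(t:ℂ) - ρ / (t:ℂ)).re = -t - ρ.re / t := by
            simp [Complex.sub_re, Complex.neg_re, Complex.div_ofReal_re]
          rw [hre]
          have h1 : Real.exp (-t - ρ.re / t) ≤ Real.exp (-t) := by
            apply Real.exp_le_exp.2
            have : 0 ≤ ρ.re / t := div_nonneg hρ ht'.le
            linarith
          have h2 : (w - 1).re = w.re - 1 := by simp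
          rw [h2, mul_comm]
          exact mul_le_mul_of_nonneg_right h1 (Real.rpow_nonneg ht'.le _)
    _ = Real.Gamma w.re := (Real.Gamma_eq_integral hw).symm

lemma half_cast (y : ℝ) : ((y:ℂ)/2) = ((y/2 : ℝ) : ℂ) := by push_cast; ring

lemma hasDerivAt_halfpow (w : ℂ) {y : ℝ} (hy : 0 < y) :
    HasDerivAt (fun y : ℝ => ((y:ℂ)/2) ^ w) (w/2 * ((y:ℂ)/2) ^ (w-1)) y := by
  have hmem : ((y:ℂ)/2) ∈ Complex.slitPlane := by
    rw [half_cast]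
    exact Complex.ofReal_mem_slitPlane.2 (by linarith)
  have h1 : HasDerivAt (fun z : ℂ => (z/2) ^ w) (w * ((y:ℂ)/2) ^ (w-1) * (1/2)) (y:ℂ) := by
    have h0 : HasDerivAt (fun z : ℂ => z/2) (1/2) (y:ℂ) := (hasDerivAt_id _).div_const 2
    exact h0.cpow_const hmem
  have := h1.comp_ofReal
  convert this using 1
  ring

lemma norm_halfpow (w : ℂ) {y : ℝ} (hy : 0 < y) :
    ‖((y:ℂ)/2) ^ w‖ = (y/2) ^ w.re := by
  rw [half_cast,
    Complex.norm_cpow_eq_rpow_re_of_pos (by linarith)]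

/-- master power bound on the interval `Ioo (x/2) (2x)` -/
lemma pow_bound {x : ℝ} (hx : 0 < x) {ν : ℂ} (m : ℕ) (s : ℝ)
    (hs1 : ν.re - 3 ≤ s) (hs2 : s ≤ 2*m + ν.re + 1) {y : ℝ} (hy : y ∈ Ioo (x/2) (2*x)) :
    (y/2) ^ s ≤ ((max 1 x)^(|ν.re|+1) + (min 1 (x/4))^(ν.re-3)) * ((max 1 x)^2)^m := by
  set L := max 1 x with hL
  set l := min 1 (x/4) with hl
  have hL1 : (1:ℝ) ≤ L := le_max_left _ _
  have hl0 : 0 < l := lt_min one_pos (by linarith)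
  have hl1 : l ≤ 1 := min_le_left _ _
  have hy0 : 0 < y := lt_trans (by linarith) hy.1
  have hr0 : 0 < y/2 := by linarith
  have hrL : y/2 ≤ L := by
    have : y < 2*x := hy.2
    have : y/2 ≤ x := by linarith
    exact le_trans this (le_max_right _ _)
  have hlr : l ≤ y/2 := by
    have : x/2 < y := hy.1
    have : x/4 ≤ y/2 := by linarith
    exact le_trans (min_le_right _ _) this
  have hnn : (0:ℝ) ≤ ((max 1 x)^2)^m → True := fun _ => trivial
  have hLm : (1:ℝ) ≤ ((L:ℝ)^2)^m := one_le_pow₀ (by nlinarith)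
  rcases le_or_gt 0 s with hs | hs
  · -- r^s ≤ L^s ≤ L^(2m+ν.re+1) ≤ L^(|ν.re|+1) * (L^2)^m
    have h1 : (y/2)^s ≤ L^s := Real.rpow_le_rpow hr0.le hrL hs
    have h2 : L^s ≤ L^(2*m + ν.re + 1) := Real.rpow_le_rpow_of_exponent_le hL1 hs2
    have h3 : L^(2*(m:ℝ) + ν.re + 1) = ((L^2)^m : ℝ) * L^(ν.re+1) := by
      rw [← Real.rpow_natCast (L^2) m, ← Real.rpow_natCast L 2, ← Real.rpow_mul (by linarith),
        ← Real.rpow_add (by linarith)]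
      ring_nf
    have h4 : L^(ν.re+1) ≤ L^(|ν.re|+1) :=
      Real.rpow_le_rpow_of_exponent_le hL1 (by have := le_abs_self ν.re; linarith)
    calc (y/2)^s ≤ L^(2*(m:ℝ) + ν.re + 1) := le_trans h1 h2
      _ = ((L^2)^m : ℝ) * L^(ν.re+1) := h3
      _ ≤ ((L^2)^m : ℝ) * L^(|ν.re|+1) := by
          apply mul_le_mul_of_nonneg_left h4
          positivity
      _ ≤ (L^(|ν.re|+1) + l^(ν.re-3)) * ((L^2)^m) := by
          have hlp : (0:ℝ) ≤ l^(ν.re-3) := Real.rpow_nonneg hl0.le _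
          nlinarith [Real.rpow_nonneg (le_trans zero_le_one hL1 : (0:ℝ) ≤ L) (|ν.re|+1)]
  · -- s < 0 : r^s ≤ l^s ≤ l^(ν.re - 3)
    have h1 : (y/2)^s ≤ l^s := by
      have hq : (1:ℝ) ≤ (y/2)/l := (one_le_div hl0).2 hlr
      have : (y/2)^s = ((y/2)/l)^s * l^s := by
        rw [← Real.mul_rpow (by positivity) hl0.le]
        congr 1; field_simp
      rw [this]
      have h2 : ((y/2)/l)^s ≤ 1 := Real.rpow_le_one_of_one_le_of_nonpos hq hs.le
      have h3 : (0:ℝ) < l^s := Real.rpow_pos_of_pos hl0 _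
      nlinarith
    have h2 : l^s ≤ l^(ν.re-3) := Real.rpow_le_rpow_of_exponent_ge hl0 hl1 hs1
    calc (y/2)^s ≤ l^(ν.re-3) := le_trans h1 h2
      _ ≤ (L^(|ν.re|+1) + l^(ν.re-3)) * 1 := by
          have : (0:ℝ) ≤ L^(|ν.re|+1) := Real.rpow_nonneg (by linarith) _
          nlinarith
      _ ≤ (L^(|ν.re|+1) + l^(ν.re-3)) * ((L^2)^m) := by
          apply mul_le_mul_of_nonneg_left hLm
          have : (0:ℝ) ≤ l^(ν.re-3) := Real.rpow_nonneg hl0.le _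
          have : (0:ℝ) ≤ L^(|ν.re|+1) := Real.rpow_nonneg (by linarith) _
          linarith

lemma prod_ratio {σ τ : ℝ} (hσ : 0 < σ) (hστ : σ ≤ τ) (n : ℕ) :
    ∏ j ∈ Finset.range n, (τ + j) ≤ (max 1 (τ/σ))^n * ∏ j ∈ Finset.range n, (σ + j) := by
  have h1 : ∀ j : ℕ, τ + (j:ℝ) ≤ (max 1 (τ/σ)) * (σ + j) := by
    intro j
    have hκσ : τ ≤ (max 1 (τ/σ)) * σ := by
      calc τ = (τ/σ) * σ := by field_simp
        _ ≤ (max 1 (τ/σ)) * σ := mul_le_mul_of_nonneg_right (le_max_right _ _) hσ.le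
    have hj0 : (0:ℝ) ≤ (j:ℝ) := Nat.cast_nonneg j
    have hκ1 : (1:ℝ) ≤ max 1 (τ/σ) := le_max_left _ _
    nlinarith
  calc ∏ j ∈ Finset.range n, (τ + j)
      ≤ ∏ j ∈ Finset.range n, ((max 1 (τ/σ)) * (σ + j)) := by
        apply Finset.prod_le_prod
        · intro j _
          have : (0:ℝ) ≤ (j:ℝ) := Nat.cast_nonneg j
          linarith
        · intro j _; exact h1 j
    _ = (max 1 (τ/σ))^n * ∏ j ∈ Finset.range n, (σ + j) := by
        rw [Finset.prod_mul_distrib, Finset.prod_const, Finset.card_range]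

noncomputable def Acf (b c ρ μ : ℂ) (k : ℕ) : ℂ :=
  (-b)^k * genPoch c ρ (2*(k:ℂ)+μ) /
    ((k.factorial:ℂ) * Complex.Gamma (μ+(k:ℂ)+1) * Complex.Gamma (μ+2*(k:ℂ)+1))

noncomputable def T0 (b c ρ μ : ℂ) (k : ℕ) (y : ℝ) : ℂ :=
  Acf b c ρ μ k * ((y:ℂ)/2)^(2*(k:ℂ)+μ)
noncomputable def T1 (b c ρ μ : ℂ) (k : ℕ) (y : ℝ) : ℂ :=
  Acf b c ρ μ k * ((2*(k:ℂ)+μ)/2 * ((y:ℂ)/2)^(2*(k:ℂ)+μ-1))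
noncomputable def T2 (b c ρ μ : ℂ) (k : ℕ) (y : ℝ) : ℂ :=
  Acf b c ρ μ k * ((2*(k:ℂ)+μ)/2 * ((2*(k:ℂ)+μ-1)/2 * ((y:ℂ)/2)^(2*(k:ℂ)+μ-1-1)))

lemma unifiedG_eq_tsum (b c ρ μ : ℂ) (y : ℝ) :
    unifiedG b c μ ρ (y:ℂ) = ∑' k, T0 b c ρ μ k y := by
  rw [unifiedG]
  exact tsum_congr fun k => by rw [T0, Acf]; ring

lemma hasDerivAt_T0 (b c ρ μ : ℂ) (k : ℕ) {y : ℝ} (hy : 0 < y) :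
    HasDerivAt (fun y => T0 b c ρ μ k y) (T1 b c ρ μ k y) y :=
  (hasDerivAt_halfpow (2*(k:ℂ)+μ) hy).const_mul (Acf b c ρ μ k)

lemma hasDerivAt_T1 (b c ρ μ : ℂ) (k : ℕ) {y : ℝ} (hy : 0 < y) :
    HasDerivAt (fun y => T1 b c ρ μ k y) (T2 b c ρ μ k y) y :=
  (((hasDerivAt_halfpow (2*(k:ℂ)+μ-1) hy).const_mul ((2*(k:ℂ)+μ)/2)).const_mul
    (Acf b c ρ μ k))

lemma Acf_norm (b c ρ μ : ℂ) (k : ℕ) :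
    ‖Acf b c ρ μ k‖ = ‖b‖^k * ‖extGamma ρ (c + (2*(k:ℂ)+μ))‖ /
      (‖Complex.Gamma c‖ * (k.factorial : ℝ) * ‖Complex.Gamma (μ+(k:ℂ)+1)‖ *
        ‖Complex.Gamma (μ+2*(k:ℂ)+1)‖) := by
  rw [Acf, genPoch]
  rw [norm_div, norm_mul, norm_pow, norm_neg, norm_div, norm_mul, norm_mul]
  simp only [Complex.norm_natCast]
  ring

lemma real_Gamma_shift {τ : ℝ} (hτ : 0 < τ) (n : ℕ) :
    Real.Gamma (τ + n) = (∏ j ∈ Finset.range n, (τ + j)) * Real.Gamma τ := by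
  induction n with
  | zero => simp
  | succ n ih =>
    have h1 : τ + ((n+1 : ℕ) : ℝ) = (τ + n) + 1 := by push_cast; ring
    have h2 : τ + (n:ℝ) ≠ 0 := by positivity
    rw [h1, Real.Gamma_add_one h2, ih, Finset.prod_range_succ]
    ring

lemma summable_quad (C q Z : ℝ) (hC : 0 ≤ C) (hZ : 0 ≤ Z) :
    Summable (fun k : ℕ => C * (2*k+q)^2 * Z^k / k.factorial) := by
  apply Summable.of_nonneg_of_le (f := fun k => (C * (2+|q|)^2 * 4) * ((4*Z)^k / k.factorial))
  · intro k; positivity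
  · intro k
    have hk1 : ((k:ℝ)+1)^2 ≤ 4 * 4^k := by
      have h := Nat.lt_two_pow_self (n := k+1)
      have h2 : ((k:ℝ)+1) ≤ 2 * 2^k := by
        have := (Nat.cast_le (α := ℝ)).2 h.le
        push_cast at this
        calc ((k:ℝ)+1) ≤ 2^(k+1) := by exact_mod_cast this
          _ = 2 * 2^k := by ring
      calc ((k:ℝ)+1)^2 ≤ (2 * 2^k)^2 := by nlinarith [pow_nonneg (by norm_num : (0:ℝ) ≤ 2) k]
        _ = 4 * 4^k := by
            rw [mul_pow]
            norm_num
            rw [← pow_mul, mul_comm k 2, pow_mul]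
            norm_num
    have hq : (2*(k:ℝ)+q)^2 ≤ (2+|q|)^2 * ((k:ℝ)+1)^2 := by
      have h1 : |2*(k:ℝ)+q| ≤ (2+|q|)*((k:ℝ)+1) := by
        calc |2*(k:ℝ)+q| ≤ |2*(k:ℝ)| + |q| := abs_add_le _ _
          _ = 2*(k:ℝ) + |q| := by rw [_root_.abs_of_nonneg (by positivity : (0:ℝ) ≤ 2*(k:ℝ))]
          _ ≤ (2+|q|)*((k:ℝ)+1) := by nlinarith [abs_nonneg q, Nat.cast_nonneg (α := ℝ) k]
      calc (2*(k:ℝ)+q)^2 = |2*(k:ℝ)+q|^2 := (_root_.sq_abs _).symm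
        _ ≤ ((2+|q|)*((k:ℝ)+1))^2 := by
            apply pow_le_pow_left₀ (abs_nonneg _) h1
        _ = (2+|q|)^2 * ((k:ℝ)+1)^2 := by ring
    have hkf : (0:ℝ) < k.factorial := by positivity
    have hrhs : C * (2+|q|)^2 * 4 * ((4*Z)^k / k.factorial)
        = (C * (2+|q|)^2 * 4 * (4*Z)^k) / k.factorial := by ring
    rw [hrhs, div_le_div_iff₀ hkf hkf]
    have hZk : (0:ℝ) ≤ Z^k := pow_nonneg hZ k
    have h4Z : (4*Z)^k = 4^k * Z^k := mul_pow 4 Z k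
    calc C * (2*k+q)^2 * Z^k * k.factorial
        ≤ C * ((2+|q|)^2 * ((k:ℝ)+1)^2) * Z^k * k.factorial := by
          have := mul_le_mul_of_nonneg_right (mul_le_mul_of_nonneg_left hq hC)
            (mul_nonneg hZk hkf.le)
          calc C * (2*k+q)^2 * Z^k * (k.factorial:ℝ)
              = C * (2*k+q)^2 * (Z^k * k.factorial) := by ring
            _ ≤ C * ((2+|q|)^2 * ((k:ℝ)+1)^2) * (Z^k * k.factorial) := this
            _ = C * ((2+|q|)^2 * ((k:ℝ)+1)^2) * Z^k * k.factorial := by ring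
      _ ≤ C * ((2+|q|)^2 * (4 * 4^k)) * Z^k * k.factorial := by
          have h0 : (0:ℝ) ≤ C * (2+|q|)^2 := by positivity
          nlinarith [mul_nonneg (mul_nonneg h0 hZk) hkf.le,
            mul_le_mul_of_nonneg_right (mul_le_mul_of_nonneg_left hk1 h0)
              (mul_nonneg hZk hkf.le)]
      _ = C * (2+|q|)^2 * 4 * ((4*Z)^k) * k.factorial := by rw [h4Z]; ring
  · exact (Real.summable_pow_div_factorial (4*Z)).mul_left _

lemma Gamma_shift (z : ℂ) (hz : 0 < z.re) (n : ℕ) :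
    Complex.Gamma (z + n) = (∏ j ∈ Finset.range n, (z + j)) * Complex.Gamma z := by
  induction n with
  | zero => simp
  | succ n ih =>
    have h1 : z + ((n+1 : ℕ) : ℂ) = (z + n) + 1 := by push_cast; ring
    have h2 : z + (n:ℂ) ≠ 0 := by
      intro h
      have : (z + (n:ℂ)).re = 0 := by rw [h]; simp
      simp only [Complex.add_re, Complex.natCast_re] at this
      have : (0:ℝ) ≤ (n:ℝ) := Nat.cast_nonneg n
      linarith
    rw [h1, Complex.Gamma_add_one _ h2, ih, Finset.prod_range_succ]
    ring

lemma Gamma_norm_ge (z : ℂ) (hz : 0 < z.re) (n : ℕ) :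
    (∏ j ∈ Finset.range n, (z.re + j)) * ‖Complex.Gamma z‖ ≤ ‖Complex.Gamma (z + n)‖ := by
  rw [Gamma_shift z hz n, norm_mul]
  apply mul_le_mul_of_nonneg_right _ (norm_nonneg _)
  rw [norm_prod]
  apply Finset.prod_le_prod
  · intro j _; positivity
  · intro j _
    calc z.re + (j:ℝ) = (z + (j:ℂ)).re := by simp
      _ ≤ ‖z + (j:ℂ)‖ := Complex.re_le_norm _

lemma prod_ge_min {σ : ℝ} (hσ : 0 < σ) (n : ℕ) :
    min 1 σ ≤ ∏ j ∈ Finset.range n, (σ + j) := by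
  induction n with
  | zero => simp
  | succ n ih =>
    rw [Finset.prod_range_succ]
    rcases Nat.eq_zero_or_pos n with h | h
    · subst h; simpa using min_le_right 1 σ
    · have h1 : (1:ℝ) ≤ σ + n := by
        have : (1:ℝ) ≤ (n:ℝ) := by exact_mod_cast h
        linarith
      calc min 1 σ ≤ (∏ j ∈ Finset.range n, (σ + j)) * 1 := by
            rw [mul_one]; exact ih
        _ ≤ (∏ j ∈ Finset.range n, (σ + j)) * (σ + n) := by
            apply mul_le_mul_of_nonneg_left h1
            apply Finset.prod_nonneg; intro j _; positivity

lemma prod_tail_ge {σ : ℝ} (hσ : 0 < σ) (n p : ℕ) :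
    (min 1 σ)^p * ∏ j ∈ Finset.range n, (σ + j) ≤ ∏ j ∈ Finset.range (n+p), (σ + j) := by
  rw [Finset.prod_range_add]
  rw [mul_comm]
  apply mul_le_mul_of_nonneg_left _ (Finset.prod_nonneg fun j _ => by positivity)
  calc (min 1 σ)^p ≤ ∏ _i ∈ Finset.range p, σ := by
        rw [Finset.prod_const, Finset.card_range]
        apply pow_le_pow_left₀ (le_min zero_le_one hσ.le) (min_le_right _ _)
    _ ≤ ∏ i ∈ Finset.range p, (σ + (n + i : ℕ)) := by
        apply Finset.prod_le_prod (fun i _ => hσ.le)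
        intro i _
        have : (0:ℝ) ≤ ((n + i : ℕ) : ℝ) := Nat.cast_nonneg _
        linarith

lemma gnorm_ge (ν : ℂ) (hν : 0 < ν.re) (n : ℕ) :
    min 1 ν.re * ‖Complex.Gamma ν‖ ≤ ‖Complex.Gamma (ν + n)‖ :=
  le_trans (mul_le_mul_of_nonneg_right (prod_ge_min hν n) (norm_nonneg _))
    (Gamma_norm_ge ν hν n)

lemma gnorm_ge2 (ν : ℂ) (hν : 0 < ν.re) (n p : ℕ) :
    ((min 1 ν.re)^p * ∏ j ∈ Finset.range n, (ν.re + j)) * ‖Complex.Gamma ν‖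
      ≤ ‖Complex.Gamma (ν + ((n+p : ℕ) : ℂ))‖ :=
  le_trans (mul_le_mul_of_nonneg_right (prod_tail_ge hν n p) (norm_nonneg _))
    (Gamma_norm_ge ν hν (n+p))

lemma coef_step {Bb Γτ κ Gc mν Gν Pp N D : ℝ} (k : ℕ)
    (hBb : 0 ≤ Bb) (hΓτ : 0 < Γτ) (hκ : 1 ≤ κ) (hGc : 0 < Gc) (hmν : 0 < mν)
    (hGν : 0 < Gν) (hPp : 0 < Pp)
    (hNnn : 0 ≤ N)
    (hN : N ≤ (Bb^(k+1) * Γτ * κ^(2*k+2)) * Pp)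
    (hD : (Gc * ((k+1).factorial : ℝ) * mν^3 * Gν^2) * Pp ≤ D) :
    N / D ≤ ((1+Bb)*Γτ*κ^2/(Gc*mν^3*Gν^2)) * (Bb*κ^2)^k / (k.factorial : ℝ) := by
  have hκ0 : (0:ℝ) < κ := lt_of_lt_of_le one_pos hκ
  have hDpos : (0:ℝ) < (Gc * ((k+1).factorial : ℝ) * mν^3 * Gν^2) * Pp := by positivity
  have h1 : N / D ≤ ((Bb^(k+1) * Γτ * κ^(2*k+2)) * Pp) /
      ((Gc * ((k+1).factorial : ℝ) * mν^3 * Gν^2) * Pp) :=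
    div_le_div₀ (by positivity) hN hDpos hD
  rw [mul_div_mul_right _ _ hPp.ne'] at h1
  refine h1.trans ?_
  have h2 : Bb^(k+1) * Γτ * κ^(2*k+2) ≤ ((1+Bb)*Γτ*κ^2) * (Bb*κ^2)^k := by
    have e1 : Bb^(k+1) * Γτ * κ^(2*k+2) = (Bb*Γτ*κ^2) * (Bb*κ^2)^k := by
      rw [mul_pow, pow_succ, pow_add, pow_mul]
      ring
    rw [e1]
    have hp : (0:ℝ) ≤ (Bb*κ^2)^k := by positivity
    nlinarith [mul_nonneg (mul_nonneg hΓτ.le (sq_nonneg κ)) hp]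
  have h3 : Gc * (k.factorial : ℝ) * mν^3 * Gν^2
      ≤ Gc * ((k+1).factorial : ℝ) * mν^3 * Gν^2 := by
    have : (k.factorial : ℝ) ≤ ((k+1).factorial : ℝ) := by
      exact_mod_cast Nat.factorial_le (Nat.le_succ k)
    nlinarith [mul_pos (mul_pos hGc (pow_pos hmν 3)) (pow_pos hGν 2)]
  calc (Bb^(k+1) * Γτ * κ^(2*k+2)) / (Gc * ((k+1).factorial : ℝ) * mν^3 * Gν^2)
      ≤ (((1+Bb)*Γτ*κ^2) * (Bb*κ^2)^k) / (Gc * (k.factorial : ℝ) * mν^3 * Gν^2) :=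
        div_le_div₀ (by positivity) h2 (by positivity) h3
    _ = ((1+Bb)*Γτ*κ^2/(Gc*mν^3*Gν^2)) * (Bb*κ^2)^k / (k.factorial : ℝ) := by
        rw [div_mul_eq_mul_div, div_div]
        congr 1
        ring

noncomputable def CAx (b c ν : ℂ) : ℝ :=
  (1+‖b‖) * Real.Gamma (c.re+ν.re) * (max 1 ((c.re+ν.re)/ν.re))^2 /
    (‖Complex.Gamma (c-1)‖ * (min 1 ν.re)^3 * ‖Complex.Gamma ν‖^2)
noncomputable def Xx (b c ν : ℂ) : ℝ := ‖b‖ * (max 1 ((c.re+ν.re)/ν.re))^2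

lemma Acf_succ_bound (b c ν ρ : ℂ) (hρ : 0 < ρ.re) (hc : 1 < c.re) (hν : 0 < ν.re)
    (μ : ℂ) (hμ : μ = ν - 1 ∨ μ = ν + 1) (k : ℕ) :
    ‖Acf b (c-1) ρ μ (k+1)‖ ≤ CAx b c ν * (Xx b c ν)^k / (k.factorial : ℝ) := by
  have hσ : 0 < ν.re := hν
  have hτ0 : (0:ℝ) < c.re + ν.re := by linarith
  have hστ : ν.re ≤ c.re + ν.re := by linarith
  have hκ : (1:ℝ) ≤ max 1 ((c.re+ν.re)/ν.re) := le_max_left _ _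
  have hΓτ : (0:ℝ) < Real.Gamma (c.re+ν.re) := Real.Gamma_pos_of_pos hτ0
  have hGc : (0:ℝ) < ‖Complex.Gamma (c-1)‖ := by
    rw [norm_pos_iff]
    apply Complex.Gamma_ne_zero_of_re_pos
    simp only [Complex.sub_re, Complex.one_re]
    linarith
  have hGν : (0:ℝ) < ‖Complex.Gamma ν‖ := by
    rw [norm_pos_iff]; exact Complex.Gamma_ne_zero_of_re_pos hν
  have hmν : (0:ℝ) < min 1 ν.re := lt_min one_pos hν
  rw [Acf_norm, CAx, Xx]
  rcases hμ with rfl | rfl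
  · -- μ = ν - 1
    have hPp : (0:ℝ) < ∏ j ∈ Finset.range (2*k), (ν.re + j) :=
      Finset.prod_pos fun j _ => by positivity
    have hargE : (c-1) + (2*(((k+1):ℕ):ℂ) + (ν-1)) = (c+ν) + ((2*k:ℕ):ℂ) := by
      push_cast; ring
    have hreE : ((c+ν) + ((2*k:ℕ):ℂ)).re = (c.re+ν.re) + (2*k:ℕ) := by
      simp [Complex.add_re, Complex.natCast_re]
    have hnum : ‖extGamma ρ ((c-1) + (2*(((k+1):ℕ):ℂ) + (ν-1)))‖
        ≤ Real.Gamma (c.re+ν.re) * (max 1 ((c.re+ν.re)/ν.re))^(2*k+2) *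
          ∏ j ∈ Finset.range (2*k), (ν.re + j) := by
      rw [hargE]
      refine (extGamma_norm_le hρ.le (by rw [hreE]; positivity)).trans ?_
      rw [hreE, real_Gamma_shift hτ0 (2*k)]
      calc (∏ j ∈ Finset.range (2*k), ((c.re+ν.re) + j)) * Real.Gamma (c.re+ν.re)
          ≤ ((max 1 ((c.re+ν.re)/ν.re))^(2*k) * ∏ j ∈ Finset.range (2*k), (ν.re + j)) *
              Real.Gamma (c.re+ν.re) :=
            mul_le_mul_of_nonneg_right (prod_ratio hσ hστ (2*k)) hΓτ.le
        _ ≤ ((max 1 ((c.re+ν.re)/ν.re))^(2*k+2) * ∏ j ∈ Finset.range (2*k), (ν.re + j)) *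
              Real.Gamma (c.re+ν.re) := by
            have hκk : (max 1 ((c.re+ν.re)/ν.re))^(2*k) ≤
                (max 1 ((c.re+ν.re)/ν.re))^(2*k+2) :=
              pow_le_pow_right₀ hκ (by omega)
            apply mul_le_mul_of_nonneg_right _ hΓτ.le
            exact mul_le_mul_of_nonneg_right hκk hPp.le
        _ = _ := by ring
    have hd1arg : (ν-1) + (((k+1):ℕ):ℂ) + 1 = ν + (((k+1):ℕ):ℂ) := by push_cast; ring
    have hd1 : min 1 ν.re * ‖Complex.Gamma ν‖ ≤ ‖Complex.Gamma ((ν-1) + (((k+1):ℕ):ℂ) + 1)‖ := by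
      rw [hd1arg]; exact gnorm_ge ν hν (k+1)
    have hd2arg : (ν-1) + 2*(((k+1):ℕ):ℂ) + 1 = ν + (((2*k+2):ℕ):ℂ) := by push_cast; ring
    have hd2 : ((min 1 ν.re)^2 * ∏ j ∈ Finset.range (2*k), (ν.re + j)) * ‖Complex.Gamma ν‖
        ≤ ‖Complex.Gamma ((ν-1) + 2*(((k+1):ℕ):ℂ) + 1)‖ := by
      rw [hd2arg]; exact gnorm_ge2 ν hν (2*k) 2
    apply coef_step k (norm_nonneg b) hΓτ hκ hGc hmν hGν hPp (by positivity)
    · calc ‖b‖^(k+1) * ‖extGamma ρ ((c-1) + (2*(((k+1):ℕ):ℂ) + (ν-1)))‖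
          ≤ ‖b‖^(k+1) * (Real.Gamma (c.re+ν.re) * (max 1 ((c.re+ν.re)/ν.re))^(2*k+2) *
              ∏ j ∈ Finset.range (2*k), (ν.re + j)) :=
            mul_le_mul_of_nonneg_left hnum (by positivity)
        _ = (‖b‖^(k+1) * Real.Gamma (c.re+ν.re) * (max 1 ((c.re+ν.re)/ν.re))^(2*k+2)) *
              ∏ j ∈ Finset.range (2*k), (ν.re + j) := by ring
    · calc (‖Complex.Gamma (c-1)‖ * (((k+1).factorial : ℕ) : ℝ) * (min 1 ν.re)^3 *
            ‖Complex.Gamma ν‖^2) * ∏ j ∈ Finset.range (2*k), (ν.re + j)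
          = (‖Complex.Gamma (c-1)‖ * (((k+1).factorial : ℕ) : ℝ)) *
            ((min 1 ν.re * ‖Complex.Gamma ν‖) *
              (((min 1 ν.re)^2 * ∏ j ∈ Finset.range (2*k), (ν.re + j)) * ‖Complex.Gamma ν‖)) := by
            ring
        _ ≤ (‖Complex.Gamma (c-1)‖ * (((k+1).factorial : ℕ) : ℝ)) *
            (‖Complex.Gamma ((ν-1) + (((k+1):ℕ):ℂ) + 1)‖ *
              ‖Complex.Gamma ((ν-1) + 2*(((k+1):ℕ):ℂ) + 1)‖) := by
            apply mul_le_mul_of_nonneg_left _ (by positivity)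
            exact mul_le_mul hd1 hd2 (by positivity) (norm_nonneg _)
        _ = ‖Complex.Gamma (c-1)‖ * (((k+1).factorial : ℕ) : ℝ) *
            ‖Complex.Gamma ((ν-1) + (((k+1):ℕ):ℂ) + 1)‖ *
            ‖Complex.Gamma ((ν-1) + 2*(((k+1):ℕ):ℂ) + 1)‖ := by ring
  · -- μ = ν + 1
    have hPp : (0:ℝ) < ∏ j ∈ Finset.range (2*k+2), (ν.re + j) :=
      Finset.prod_pos fun j _ => by positivity
    have hargE : (c-1) + (2*(((k+1):ℕ):ℂ) + (ν+1)) = (c+ν) + ((2*k+2:ℕ):ℂ) := by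
      push_cast; ring
    have hreE : ((c+ν) + ((2*k+2:ℕ):ℂ)).re = (c.re+ν.re) + (2*k+2:ℕ) := by
      simp [Complex.add_re, Complex.natCast_re]
    have hnum : ‖extGamma ρ ((c-1) + (2*(((k+1):ℕ):ℂ) + (ν+1)))‖
        ≤ Real.Gamma (c.re+ν.re) * (max 1 ((c.re+ν.re)/ν.re))^(2*k+2) *
          ∏ j ∈ Finset.range (2*k+2), (ν.re + j) := by
      rw [hargE]
      refine (extGamma_norm_le hρ.le (by rw [hreE]; positivity)).trans ?_
      rw [hreE, real_Gamma_shift hτ0 (2*k+2)]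
      calc (∏ j ∈ Finset.range (2*k+2), ((c.re+ν.re) + j)) * Real.Gamma (c.re+ν.re)
          ≤ ((max 1 ((c.re+ν.re)/ν.re))^(2*k+2) * ∏ j ∈ Finset.range (2*k+2), (ν.re + j)) *
              Real.Gamma (c.re+ν.re) :=
            mul_le_mul_of_nonneg_right (prod_ratio hσ hστ (2*k+2)) hΓτ.le
        _ = _ := by ring
    have hd1arg : (ν+1) + (((k+1):ℕ):ℂ) + 1 = ν + (((k+3):ℕ):ℂ) := by push_cast; ring
    have hd1 : min 1 ν.re * ‖Complex.Gamma ν‖ ≤ ‖Complex.Gamma ((ν+1) + (((k+1):ℕ):ℂ) + 1)‖ := by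
      rw [hd1arg]; exact gnorm_ge ν hν (k+3)
    have hd2arg : (ν+1) + 2*(((k+1):ℕ):ℂ) + 1 = ν + ((((2*k+2)+2):ℕ):ℂ) := by push_cast; ring
    have hd2 : ((min 1 ν.re)^2 * ∏ j ∈ Finset.range (2*k+2), (ν.re + j)) * ‖Complex.Gamma ν‖
        ≤ ‖Complex.Gamma ((ν+1) + 2*(((k+1):ℕ):ℂ) + 1)‖ := by
      rw [hd2arg]; exact gnorm_ge2 ν hν (2*k+2) 2
    apply coef_step k (norm_nonneg b) hΓτ hκ hGc hmν hGν hPp (by positivity)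
    · calc ‖b‖^(k+1) * ‖extGamma ρ ((c-1) + (2*(((k+1):ℕ):ℂ) + (ν+1)))‖
          ≤ ‖b‖^(k+1) * (Real.Gamma (c.re+ν.re) * (max 1 ((c.re+ν.re)/ν.re))^(2*k+2) *
              ∏ j ∈ Finset.range (2*k+2), (ν.re + j)) :=
            mul_le_mul_of_nonneg_left hnum (by positivity)
        _ = (‖b‖^(k+1) * Real.Gamma (c.re+ν.re) * (max 1 ((c.re+ν.re)/ν.re))^(2*k+2)) *
              ∏ j ∈ Finset.range (2*k+2), (ν.re + j) := by ring
    · calc (‖Complex.Gamma (c-1)‖ * (((k+1).factorial : ℕ) : ℝ) * (min 1 ν.re)^3 *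
            ‖Complex.Gamma ν‖^2) * ∏ j ∈ Finset.range (2*k+2), (ν.re + j)
          = (‖Complex.Gamma (c-1)‖ * (((k+1).factorial : ℕ) : ℝ)) *
            ((min 1 ν.re * ‖Complex.Gamma ν‖) *
              (((min 1 ν.re)^2 * ∏ j ∈ Finset.range (2*k+2), (ν.re + j)) * ‖Complex.Gamma ν‖)) := by
            ring
        _ ≤ (‖Complex.Gamma (c-1)‖ * (((k+1).factorial : ℕ) : ℝ)) *
            (‖Complex.Gamma ((ν+1) + (((k+1):ℕ):ℂ) + 1)‖ *
              ‖Complex.Gamma ((ν+1) + 2*(((k+1):ℕ):ℂ) + 1)‖) := by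
            apply mul_le_mul_of_nonneg_left _ (by positivity)
            exact mul_le_mul hd1 hd2 (by positivity) (norm_nonneg _)
        _ = ‖Complex.Gamma (c-1)‖ * (((k+1).factorial : ℕ) : ℝ) *
            ‖Complex.Gamma ((ν+1) + (((k+1):ℕ):ℂ) + 1)‖ *
            ‖Complex.Gamma ((ν+1) + 2*(((k+1):ℕ):ℂ) + 1)‖ := by ring

noncomputable def CPx (ν : ℂ) (x : ℝ) : ℝ := (max 1 x)^(|ν.re|+1) + (min 1 (x/4))^(ν.re-3)
noncomputable def Zx (b c ν : ℂ) (x : ℝ) : ℝ := Xx b c ν * (max 1 x)^2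
noncomputable def Vx (b c ν : ℂ) (x : ℝ) (k : ℕ) : ℝ :=
  (CAx b c ν * CPx ν x * (max 1 x)^4) * (2*(k:ℝ)+(‖ν‖+6))^2 * (Zx b c ν x)^k / (k.factorial : ℝ)
noncomputable def U0x (b c ν ρ : ℂ) (x : ℝ) : ℝ :=
  (‖Acf b (c-1) ρ (ν-1) 0‖ + ‖Acf b (c-1) ρ (ν+1) 0‖) * ((‖ν‖+6)^2 * (CPx ν x * (max 1 x)^2))

lemma CAx_pos (b c ν : ℂ) (hc : 1 < c.re) (hν : 0 < ν.re) : 0 < CAx b c ν := by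
  rw [CAx]
  have hGc : (0:ℝ) < ‖Complex.Gamma (c-1)‖ := by
    rw [norm_pos_iff]
    apply Complex.Gamma_ne_zero_of_re_pos
    simp only [Complex.sub_re, Complex.one_re]; linarith
  have hGν : (0:ℝ) < ‖Complex.Gamma ν‖ := by
    rw [norm_pos_iff]; exact Complex.Gamma_ne_zero_of_re_pos hν
  have hΓτ : (0:ℝ) < Real.Gamma (c.re+ν.re) := Real.Gamma_pos_of_pos (by linarith)
  have h1 : (0:ℝ) < 1 + ‖b‖ := by positivity
  have hκ : (0:ℝ) < max 1 ((c.re+ν.re)/ν.re) := lt_of_lt_of_le one_pos (le_max_left _ _)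
  have hm : (0:ℝ) < min 1 ν.re := lt_min one_pos hν
  positivity

lemma CPx_pos (ν : ℂ) (x : ℝ) (hx : 0 < x) : 0 < CPx ν x := by
  rw [CPx]
  have h1 : (0:ℝ) < max 1 x := lt_of_lt_of_le one_pos (le_max_left _ _)
  have h2 : (0:ℝ) < min 1 (x/4) := lt_min one_pos (by linarith)
  positivity

lemma Xx_nonneg (b c ν : ℂ) : 0 ≤ Xx b c ν := by
  rw [Xx]; positivity

lemma Zx_nonneg (b c ν : ℂ) (x : ℝ) : 0 ≤ Zx b c ν x := by
  rw [Zx]; exact mul_nonneg (Xx_nonneg b c ν) (by positivity)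

lemma mu_re_bounds (ν μ : ℂ) (hμ : μ = ν - 1 ∨ μ = ν + 1) :
    ν.re - 1 ≤ μ.re ∧ μ.re ≤ ν.re + 1 ∧ ‖μ‖ ≤ ‖ν‖ + 1 := by
  rcases hμ with rfl | rfl
  · have h : (ν-1).re = ν.re - 1 := by simp
    refine ⟨by rw [h], by rw [h]; linarith, ?_⟩
    calc ‖ν - 1‖ ≤ ‖ν‖ + ‖(1:ℂ)‖ := norm_sub_le _ _
      _ = ‖ν‖ + 1 := by norm_num
  · have h : (ν+1).re = ν.re + 1 := by simp
    refine ⟨by rw [h]; linarith, by rw [h], ?_⟩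
    calc ‖ν + 1‖ ≤ ‖ν‖ + ‖(1:ℂ)‖ := norm_add_le _ _
      _ = ‖ν‖ + 1 := by norm_num

lemma term_succ_bound (b c ν ρ : ℂ) (hρ : 0 < ρ.re) (hc : 1 < c.re) (hν : 0 < ν.re)
    (x : ℝ) (hx : 0 < x) (μ : ℂ) (hμ : μ = ν - 1 ∨ μ = ν + 1) (k : ℕ) (y : ℝ)
    (hy : y ∈ Ioo (x/2) (2*x)) :
    ‖T0 b (c-1) ρ μ (k+1) y‖ ≤ Vx b c ν x k ∧ ‖T1 b (c-1) ρ μ (k+1) y‖ ≤ Vx b c ν x k ∧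
      ‖T2 b (c-1) ρ μ (k+1) y‖ ≤ Vx b c ν x k := by
  obtain ⟨hμ1, hμ2, hμn⟩ := mu_re_bounds ν μ hμ
  have hk0 : (0:ℝ) ≤ (k:ℝ) := Nat.cast_nonneg k
  have hy0 : 0 < y := lt_trans (by linarith) hy.1
  have hA := Acf_succ_bound b c ν ρ hρ hc hν μ hμ k
  have hCA := CAx_pos b c ν hc hν
  have hCP := CPx_pos ν x hx
  have hXp : (0:ℝ) ≤ (Xx b c ν)^k := pow_nonneg (Xx_nonneg _ _ _) k
  have hL1 : (1:ℝ) ≤ max 1 x := le_max_left _ _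
  have hL0 : (0:ℝ) < ((max 1 x)^2)^(k+2) := by positivity
  have hAnn : 0 ≤ CAx b c ν * (Xx b c ν)^k / (k.factorial : ℝ) := by positivity
  have hν0 : (0:ℝ) ≤ ‖ν‖ := norm_nonneg ν
  have hq1 : (1:ℝ) ≤ 2*(k:ℝ)+(‖ν‖+6) := by linarith
  have hq0 : (0:ℝ) ≤ 2*(k:ℝ)+(‖ν‖+6) := by linarith
  have hsq : (2*(k:ℝ)+(‖ν‖+6)) ≤ (2*(k:ℝ)+(‖ν‖+6))^2 := by nlinarith
  have h2c : ‖(2:ℂ)‖ = 2 := by norm_num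
  have hwn : ‖2*(((k+1):ℕ):ℂ)+μ‖ ≤ 2*((k:ℝ)+1) + (‖ν‖+1) := by
    calc ‖2*(((k+1):ℕ):ℂ)+μ‖ ≤ ‖(2:ℂ)*(((k+1):ℕ):ℂ)‖ + ‖μ‖ := norm_add_le _ _
      _ = 2*((k:ℝ)+1) + ‖μ‖ := by
          rw [norm_mul, h2c, Complex.norm_natCast]; push_cast; ring
      _ ≤ 2*((k:ℝ)+1) + (‖ν‖+1) := by linarith
  have hs1 : ‖(2*(((k+1):ℕ):ℂ)+μ)/2‖ ≤ 2*(k:ℝ)+(‖ν‖+6) := by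
    rw [norm_div, h2c, div_le_iff₀ (by norm_num : (0:ℝ) < 2)]
    calc ‖2*(((k+1):ℕ):ℂ)+μ‖ ≤ 2*((k:ℝ)+1) + (‖ν‖+1) := hwn
      _ ≤ (2*(k:ℝ)+(‖ν‖+6))*2 := by linarith
  have hs2 : ‖(2*(((k+1):ℕ):ℂ)+μ-1)/2‖ ≤ 2*(k:ℝ)+(‖ν‖+6) := by
    rw [norm_div, h2c, div_le_iff₀ (by norm_num : (0:ℝ) < 2)]
    calc ‖2*(((k+1):ℕ):ℂ)+μ-1‖ ≤ ‖2*(((k+1):ℕ):ℂ)+μ‖ + ‖(1:ℂ)‖ := norm_sub_le _ _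
      _ ≤ 2*((k:ℝ)+1) + (‖ν‖+1) + 1 := by
          have : ‖(1:ℂ)‖ = 1 := by norm_num
          linarith [hwn]
      _ ≤ (2*(k:ℝ)+(‖ν‖+6))*2 := by linarith
  have hre0 : (2*(((k+1):ℕ):ℂ)+μ).re = 2*((k:ℝ)+1)+μ.re := by simp
  have hre1 : (2*(((k+1):ℕ):ℂ)+μ-1).re = 2*((k:ℝ)+1)+μ.re-1 := by simp
  have hre2 : (2*(((k+1):ℕ):ℂ)+μ-1-1).re = 2*((k:ℝ)+1)+μ.re-1-1 := by simp
  have hp0 : ‖((y:ℂ)/2)^(2*(((k+1):ℕ):ℂ)+μ)‖ ≤ CPx ν x * ((max 1 x)^2)^(k+2) := by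
    rw [norm_halfpow _ hy0, hre0, CPx]
    exact pow_bound hx (k+2) _ (by linarith) (by push_cast; linarith) hy
  have hp1 : ‖((y:ℂ)/2)^(2*(((k+1):ℕ):ℂ)+μ-1)‖ ≤ CPx ν x * ((max 1 x)^2)^(k+2) := by
    rw [norm_halfpow _ hy0, hre1, CPx]
    exact pow_bound hx (k+2) _ (by linarith) (by push_cast; linarith) hy
  have hp2 : ‖((y:ℂ)/2)^(2*(((k+1):ℕ):ℂ)+μ-1-1)‖ ≤ CPx ν x * ((max 1 x)^2)^(k+2) := by
    rw [norm_halfpow _ hy0, hre2, CPx]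
    exact pow_bound hx (k+2) _ (by linarith) (by push_cast; linarith) hy
  refine ⟨?_, ?_, ?_⟩
  · rw [T0, norm_mul]
    calc ‖Acf b (c-1) ρ μ (k+1)‖ * ‖((y:ℂ)/2)^(2*(((k+1):ℕ):ℂ)+μ)‖
        ≤ (CAx b c ν * (Xx b c ν)^k / (k.factorial : ℝ)) * (CPx ν x * ((max 1 x)^2)^(k+2)) :=
          mul_le_mul hA hp0 (norm_nonneg _) hAnn
      _ ≤ (CAx b c ν * (Xx b c ν)^k / (k.factorial : ℝ)) *
            ((2*(k:ℝ)+(‖ν‖+6))^2 * (CPx ν x * ((max 1 x)^2)^(k+2))) := by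
          apply mul_le_mul_of_nonneg_left _ hAnn
          apply le_mul_of_one_le_left (by positivity)
          nlinarith
      _ = Vx b c ν x k := by rw [Vx, Zx]; ring
  · rw [T1, norm_mul, norm_mul]
    calc ‖Acf b (c-1) ρ μ (k+1)‖ * (‖(2*(((k+1):ℕ):ℂ)+μ)/2‖ *
          ‖((y:ℂ)/2)^(2*(((k+1):ℕ):ℂ)+μ-1)‖)
        ≤ (CAx b c ν * (Xx b c ν)^k / (k.factorial : ℝ)) *
            ((2*(k:ℝ)+(‖ν‖+6)) * (CPx ν x * ((max 1 x)^2)^(k+2))) :=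
          mul_le_mul hA (mul_le_mul hs1 hp1 (norm_nonneg _) hq0)
            (mul_nonneg (norm_nonneg _) (norm_nonneg _)) hAnn
      _ ≤ (CAx b c ν * (Xx b c ν)^k / (k.factorial : ℝ)) *
            ((2*(k:ℝ)+(‖ν‖+6))^2 * (CPx ν x * ((max 1 x)^2)^(k+2))) := by
          apply mul_le_mul_of_nonneg_left _ hAnn
          exact mul_le_mul_of_nonneg_right hsq (by positivity)
      _ = Vx b c ν x k := by rw [Vx, Zx]; ring
  · rw [T2, norm_mul, norm_mul, norm_mul]
    calc ‖Acf b (c-1) ρ μ (k+1)‖ * (‖(2*(((k+1):ℕ):ℂ)+μ)/2‖ *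
          (‖(2*(((k+1):ℕ):ℂ)+μ-1)/2‖ * ‖((y:ℂ)/2)^(2*(((k+1):ℕ):ℂ)+μ-1-1)‖))
        ≤ (CAx b c ν * (Xx b c ν)^k / (k.factorial : ℝ)) *
            ((2*(k:ℝ)+(‖ν‖+6)) * ((2*(k:ℝ)+(‖ν‖+6)) * (CPx ν x * ((max 1 x)^2)^(k+2)))) := by
          apply mul_le_mul hA _ _ hAnn
          · exact mul_le_mul hs1 (mul_le_mul hs2 hp2 (norm_nonneg _) hq0)
              (mul_nonneg (norm_nonneg _) (norm_nonneg _)) hq0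
          · exact mul_nonneg (norm_nonneg _) (mul_nonneg (norm_nonneg _) (norm_nonneg _))
      _ = Vx b c ν x k := by rw [Vx, Zx]; ring

lemma term_zero_bound (b c ν ρ : ℂ) (hν : 0 < ν.re)
    (x : ℝ) (hx : 0 < x) (μ : ℂ) (hμ : μ = ν - 1 ∨ μ = ν + 1) (y : ℝ)
    (hy : y ∈ Ioo (x/2) (2*x)) :
    ‖T0 b (c-1) ρ μ 0 y‖ ≤ U0x b c ν ρ x ∧ ‖T1 b (c-1) ρ μ 0 y‖ ≤ U0x b c ν ρ x ∧
      ‖T2 b (c-1) ρ μ 0 y‖ ≤ U0x b c ν ρ x := by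
  obtain ⟨hμ1, hμ2, hμn⟩ := mu_re_bounds ν μ hμ
  have hy0 : 0 < y := lt_trans (by linarith) hy.1
  have hCP := CPx_pos ν x hx
  have hL1 : (1:ℝ) ≤ max 1 x := le_max_left _ _
  have hν0 : (0:ℝ) ≤ ‖ν‖ := norm_nonneg ν
  have hA : ‖Acf b (c-1) ρ μ 0‖ ≤ ‖Acf b (c-1) ρ (ν-1) 0‖ + ‖Acf b (c-1) ρ (ν+1) 0‖ := by
    rcases hμ with rfl | rfl
    · exact le_add_of_nonneg_right (norm_nonneg _)
    · exact le_add_of_nonneg_left (norm_nonneg _)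
  have hAnn : (0:ℝ) ≤ ‖Acf b (c-1) ρ (ν-1) 0‖ + ‖Acf b (c-1) ρ (ν+1) 0‖ :=
    add_nonneg (norm_nonneg _) (norm_nonneg _)
  have h2c : ‖(2:ℂ)‖ = 2 := by norm_num
  have hq0 : (0:ℝ) ≤ ‖ν‖+6 := by linarith
  have hwn : ‖2*((0:ℕ):ℂ)+μ‖ ≤ ‖ν‖+1 := by
    simpa using hμn
  have hs1 : ‖(2*((0:ℕ):ℂ)+μ)/2‖ ≤ ‖ν‖+6 := by
    rw [norm_div, h2c, div_le_iff₀ (by norm_num : (0:ℝ) < 2)]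
    calc ‖2*((0:ℕ):ℂ)+μ‖ ≤ ‖ν‖+1 := hwn
      _ ≤ (‖ν‖+6)*2 := by linarith
  have hs2 : ‖(2*((0:ℕ):ℂ)+μ-1)/2‖ ≤ ‖ν‖+6 := by
    rw [norm_div, h2c, div_le_iff₀ (by norm_num : (0:ℝ) < 2)]
    calc ‖2*((0:ℕ):ℂ)+μ-1‖ ≤ ‖2*((0:ℕ):ℂ)+μ‖ + ‖(1:ℂ)‖ := norm_sub_le _ _
      _ ≤ ‖ν‖+1+1 := by
          have : ‖(1:ℂ)‖ = 1 := by norm_num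
          linarith [hwn]
      _ ≤ (‖ν‖+6)*2 := by linarith
  have hre0 : (2*((0:ℕ):ℂ)+μ).re = μ.re := by simp
  have hre1 : (2*((0:ℕ):ℂ)+μ-1).re = μ.re-1 := by simp
  have hre2 : (2*((0:ℕ):ℂ)+μ-1-1).re = μ.re-1-1 := by simp
  have hp0 : ‖((y:ℂ)/2)^(2*((0:ℕ):ℂ)+μ)‖ ≤ CPx ν x * ((max 1 x)^2)^1 := by
    rw [norm_halfpow _ hy0, hre0, CPx]
    exact pow_bound hx 1 _ (by linarith) (by push_cast; linarith) hy
  have hp1 : ‖((y:ℂ)/2)^(2*((0:ℕ):ℂ)+μ-1)‖ ≤ CPx ν x * ((max 1 x)^2)^1 := by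
    rw [norm_halfpow _ hy0, hre1, CPx]
    exact pow_bound hx 1 _ (by linarith) (by push_cast; linarith) hy
  have hp2 : ‖((y:ℂ)/2)^(2*((0:ℕ):ℂ)+μ-1-1)‖ ≤ CPx ν x * ((max 1 x)^2)^1 := by
    rw [norm_halfpow _ hy0, hre2, CPx]
    exact pow_bound hx 1 _ (by linarith) (by push_cast; linarith) hy
  have hq1 : (1:ℝ) ≤ (‖ν‖+6)^2 := by nlinarith
  have hsq : (‖ν‖+6) ≤ (‖ν‖+6)^2 := by nlinarith
  refine ⟨?_, ?_, ?_⟩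
  · rw [T0, norm_mul]
    calc ‖Acf b (c-1) ρ μ 0‖ * ‖((y:ℂ)/2)^(2*((0:ℕ):ℂ)+μ)‖
        ≤ (‖Acf b (c-1) ρ (ν-1) 0‖ + ‖Acf b (c-1) ρ (ν+1) 0‖) *
            (CPx ν x * ((max 1 x)^2)^1) := mul_le_mul hA hp0 (norm_nonneg _) hAnn
      _ ≤ (‖Acf b (c-1) ρ (ν-1) 0‖ + ‖Acf b (c-1) ρ (ν+1) 0‖) *
            ((‖ν‖+6)^2 * (CPx ν x * ((max 1 x)^2)^1)) := by
          apply mul_le_mul_of_nonneg_left _ hAnn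
          exact le_mul_of_one_le_left (by positivity) hq1
      _ = U0x b c ν ρ x := by rw [U0x]; ring
  · rw [T1, norm_mul, norm_mul]
    calc ‖Acf b (c-1) ρ μ 0‖ * (‖(2*((0:ℕ):ℂ)+μ)/2‖ * ‖((y:ℂ)/2)^(2*((0:ℕ):ℂ)+μ-1)‖)
        ≤ (‖Acf b (c-1) ρ (ν-1) 0‖ + ‖Acf b (c-1) ρ (ν+1) 0‖) *
            ((‖ν‖+6) * (CPx ν x * ((max 1 x)^2)^1)) :=
          mul_le_mul hA (mul_le_mul hs1 hp1 (norm_nonneg _) hq0)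
            (mul_nonneg (norm_nonneg _) (norm_nonneg _)) hAnn
      _ ≤ (‖Acf b (c-1) ρ (ν-1) 0‖ + ‖Acf b (c-1) ρ (ν+1) 0‖) *
            ((‖ν‖+6)^2 * (CPx ν x * ((max 1 x)^2)^1)) := by
          apply mul_le_mul_of_nonneg_left _ hAnn
          exact mul_le_mul_of_nonneg_right hsq (by positivity)
      _ = U0x b c ν ρ x := by rw [U0x]; ring
  · rw [T2, norm_mul, norm_mul, norm_mul]
    calc ‖Acf b (c-1) ρ μ 0‖ * (‖(2*((0:ℕ):ℂ)+μ)/2‖ *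
          (‖(2*((0:ℕ):ℂ)+μ-1)/2‖ * ‖((y:ℂ)/2)^(2*((0:ℕ):ℂ)+μ-1-1)‖))
        ≤ (‖Acf b (c-1) ρ (ν-1) 0‖ + ‖Acf b (c-1) ρ (ν+1) 0‖) *
            ((‖ν‖+6) * ((‖ν‖+6) * (CPx ν x * ((max 1 x)^2)^1))) := by
          apply mul_le_mul hA _ _ hAnn
          · exact mul_le_mul hs1 (mul_le_mul hs2 hp2 (norm_nonneg _) hq0)
              (mul_nonneg (norm_nonneg _) (norm_nonneg _)) hq0
          · exact mul_nonneg (norm_nonneg _) (mul_nonneg (norm_nonneg _) (norm_nonneg _))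
      _ = U0x b c ν ρ x := by rw [U0x]; ring

lemma cpow_succ' {e : ℂ} (he : e ≠ 0) (α : ℂ) : e^α = e^(α-1) * e := by
  have h := Complex.cpow_add (α-1) 1 he
  rw [Complex.cpow_one] at h
  rw [show (α-1)+1 = α from by ring] at h
  exact h

lemma Acf_rec (b c ν ρ : ℂ) (hν : 0 < ν.re) (k : ℕ) :
    Acf b (c-1) ρ (ν-1) (k+1) * ((k:ℂ)+1) = -b * Acf b (c-1) ρ (ν+1) k * (ν+(k:ℂ)+1) := by
  have hg1 : Complex.Gamma (ν+(k:ℂ)+1) ≠ 0 := by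
    apply Complex.Gamma_ne_zero_of_re_pos
    simp only [Complex.add_re, Complex.natCast_re, Complex.one_re]
    have : (0:ℝ) ≤ (k:ℝ) := Nat.cast_nonneg k
    linarith
  have hg2 : Complex.Gamma ((ν+1)+2*(k:ℂ)+1) ≠ 0 := by
    apply Complex.Gamma_ne_zero_of_re_pos
    simp only [Complex.add_re, Complex.natCast_re, Complex.one_re, Complex.mul_re,
      Complex.re_ofNat, Complex.im_ofNat, Complex.natCast_im]
    have : (0:ℝ) ≤ (k:ℝ) := Nat.cast_nonneg k
    linarith
  have hk1 : ((k:ℂ)+1) ≠ 0 := by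
    exact_mod_cast Nat.cast_add_one_ne_zero (R := ℂ) k
  have hνk : (ν+(k:ℂ)+1) ≠ 0 := by
    intro h
    have : (ν+(k:ℂ)+1).re = 0 := by rw [h]; simp
    simp only [Complex.add_re, Complex.natCast_re, Complex.one_re] at this
    have : (0:ℝ) ≤ (k:ℝ) := Nat.cast_nonneg k
    linarith
  have hkf : ((k.factorial : ℕ):ℂ) ≠ 0 := by
    exact_mod_cast Nat.cast_ne_zero.2 k.factorial_ne_zero
  rw [Acf, Acf]
  have h3 : (2*(((k+1):ℕ):ℂ)+(ν-1)) = 2*((k:ℕ):ℂ)+(ν+1) := by push_cast; ring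
  have h1 : (ν-1)+(((k+1):ℕ):ℂ)+1 = ν+(k:ℂ)+1 := by push_cast; ring
  have h2 : (ν-1)+2*(((k+1):ℕ):ℂ)+1 = (ν+1)+2*(k:ℂ)+1 := by push_cast; ring
  have h4 : (ν+1)+(k:ℂ)+1 = (ν+(k:ℂ)+1)+1 := by ring
  have h5 : (((k+1).factorial : ℕ):ℂ) = ((k:ℂ)+1) * ((k.factorial : ℕ):ℂ) := by
    rw [Nat.factorial_succ]; push_cast; ring
  rw [h3, h1, h2, h4, Complex.Gamma_add_one _ hνk, h5]
  field_simp
  ring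

lemma term_zero_identity (b c ν ρ : ℂ) (x : ℝ) (hx : 0 < x) :
    (2-ν) * T1 b (c-1) ρ (ν-1) 0 x + (x:ℂ) * T2 b (c-1) ρ (ν-1) 0 x = 0 := by
  have he : ((x:ℂ)/2) ≠ 0 :=
    div_ne_zero (Complex.ofReal_ne_zero.2 hx.ne') two_ne_zero
  rw [T1, T2]
  rw [cpow_succ' he (2*((0:ℕ):ℂ)+(ν-1)-1)]
  ring

lemma term_identity (b c ν ρ : ℂ) (hν : 0 < ν.re) (x : ℝ) (hx : 0 < x) (k : ℕ) :
    (2-ν) * T1 b (c-1) ρ (ν-1) (k+1) x + (x:ℂ) * T2 b (c-1) ρ (ν-1) (k+1) x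
      = -b*(ν+2) * T1 b (c-1) ρ (ν+1) k x - (x:ℂ)*b * T2 b (c-1) ρ (ν+1) k x := by
  have he : ((x:ℂ)/2) ≠ 0 :=
    div_ne_zero (Complex.ofReal_ne_zero.2 hx.ne') two_ne_zero
  rw [T1, T2, T1, T2]
  have e1 : (2*(((k+1):ℕ):ℂ)+(ν-1)) = 2*((k:ℕ):ℂ)+(ν+1) := by push_cast; ring
  rw [e1]
  rw [cpow_succ' he (2*((k:ℕ):ℂ)+(ν+1)-1)]
  have hrec := Acf_rec b c ν ρ hν k
  linear_combination (((2*((k:ℕ):ℂ)+(ν+1))) *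
    ((x:ℂ)/2)^(2*((k:ℕ):ℂ)+(ν+1)-1-1) * ((x:ℂ)/2)) * hrec

noncomputable def ux (b c ν ρ : ℂ) (x : ℝ) : ℕ → ℝ
  | 0 => U0x b c ν ρ x
  | (k+1) => Vx b c ν x k

lemma ux_summable (b c ν ρ : ℂ) (hc : 1 < c.re) (hν : 0 < ν.re) (x : ℝ) (hx : 0 < x) :
    Summable (ux b c ν ρ x) := by
  apply (summable_nat_add_iff 1).mp
  have heq : (fun n : ℕ => ux b c ν ρ x (n+1)) =
      fun k : ℕ => (CAx b c ν * CPx ν x * (max 1 x)^4) * (2*(k:ℝ)+(‖ν‖+6))^2 *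
        (Zx b c ν x)^k / (k.factorial : ℝ) := by
    funext k
    rw [show ux b c ν ρ x (k+1) = Vx b c ν x k from rfl, Vx]
  rw [heq]
  apply summable_quad
  · have := CAx_pos b c ν hc hν
    have := CPx_pos ν x hx
    have : (1:ℝ) ≤ max 1 x := le_max_left _ _
    positivity
  · exact Zx_nonneg b c ν x

lemma ux_bound (b c ν ρ : ℂ) (hρ : 0 < ρ.re) (hc : 1 < c.re) (hν : 0 < ν.re)
    (x : ℝ) (hx : 0 < x) (μ : ℂ) (hμ : μ = ν - 1 ∨ μ = ν + 1) (k : ℕ) (y : ℝ)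
    (hy : y ∈ Ioo (x/2) (2*x)) :
    ‖T0 b (c-1) ρ μ k y‖ ≤ ux b c ν ρ x k ∧ ‖T1 b (c-1) ρ μ k y‖ ≤ ux b c ν ρ x k ∧
      ‖T2 b (c-1) ρ μ k y‖ ≤ ux b c ν ρ x k := by
  cases k with
  | zero => exact term_zero_bound b c ν ρ hν x hx μ hμ y hy
  | succ k => exact term_succ_bound b c ν ρ hρ hc hν x hx μ hμ k y hy

lemma deriv_repr (b c ν ρ : ℂ) (hρ : 0 < ρ.re) (hc : 1 < c.re) (hν : 0 < ν.re)
    (x : ℝ) (hx : 0 < x) (μ : ℂ) (hμ : μ = ν - 1 ∨ μ = ν + 1) :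
    deriv (fun y : ℝ => unifiedG b (c-1) μ ρ (y:ℂ)) x = ∑' k, T1 b (c-1) ρ μ k x ∧
      deriv (deriv (fun y : ℝ => unifiedG b (c-1) μ ρ (y:ℂ))) x
        = ∑' k, T2 b (c-1) ρ μ k x := by
  have hu := ux_summable b c ν ρ hc hν x hx
  have hxt : x ∈ Ioo (x/2) (2*x) := ⟨by linarith, by linarith⟩
  have ht : IsOpen (Ioo (x/2) (2*x)) := isOpen_Ioo
  have hpc : IsPreconnected (Ioo (x/2) (2*x)) := isPreconnected_Ioo
  have hpos : ∀ y ∈ Ioo (x/2) (2*x), (0:ℝ) < y := fun y hy => lt_trans (by linarith) hy.1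
  have hbnd := fun (k : ℕ) (y : ℝ) (hy : y ∈ Ioo (x/2) (2*x)) =>
    ux_bound b c ν ρ hρ hc hν x hx μ hμ k y hy
  have hder1 : ∀ y ∈ Ioo (x/2) (2*x), HasDerivAt (fun z => ∑' k, T0 b (c-1) ρ μ k z)
      (∑' k, T1 b (c-1) ρ μ k y) y := by
    intro y hy
    exact hasDerivAt_tsum_of_isPreconnected hu ht hpc
      (fun k y hy => hasDerivAt_T0 b (c-1) ρ μ k (hpos y hy))
      (fun k y hy => (hbnd k y hy).2.1) hxt
      (Summable.of_norm_bounded hu fun k => (hbnd k x hxt).1) hy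
  have hder2 : ∀ y ∈ Ioo (x/2) (2*x), HasDerivAt (fun z => ∑' k, T1 b (c-1) ρ μ k z)
      (∑' k, T2 b (c-1) ρ μ k y) y := by
    intro y hy
    exact hasDerivAt_tsum_of_isPreconnected hu ht hpc
      (fun k y hy => hasDerivAt_T1 b (c-1) ρ μ k (hpos y hy))
      (fun k y hy => (hbnd k y hy).2.2) hxt
      (Summable.of_norm_bounded hu fun k => (hbnd k x hxt).2.1) hy
  have hfun : (fun y : ℝ => unifiedG b (c-1) μ ρ (y:ℂ))
      = (fun y : ℝ => ∑' k, T0 b (c-1) ρ μ k y) := funext fun y => unifiedG_eq_tsum b (c-1) ρ μ y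
  constructor
  · rw [hfun]; exact (hder1 x hxt).deriv
  · have heq : deriv (fun y : ℝ => unifiedG b (c-1) μ ρ (y:ℂ))
        =ᶠ[nhds x] (fun y : ℝ => ∑' k, T1 b (c-1) ρ μ k y) := by
      filter_upwards [ht.mem_nhds hxt] with y hy
      rw [hfun]
      exact (hder1 y hy).deriv
    rw [heq.deriv_eq]
    exact (hder2 x hxt).deriv

lemma summable_T1 (b c ν ρ : ℂ) (hρ : 0 < ρ.re) (hc : 1 < c.re) (hν : 0 < ν.re)
    (x : ℝ) (hx : 0 < x) (μ : ℂ) (hμ : μ = ν - 1 ∨ μ = ν + 1) :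
    Summable (fun k => T1 b (c-1) ρ μ k x) ∧ Summable (fun k => T2 b (c-1) ρ μ k x) := by
  have hu := ux_summable b c ν ρ hc hν x hx
  have hxt : x ∈ Ioo (x/2) (2*x) := ⟨by linarith, by linarith⟩
  have hbnd := fun (k : ℕ) => ux_bound b c ν ρ hρ hc hν x hx μ hμ k x hxt
  exact ⟨Summable.of_norm_bounded hu fun k => (hbnd k).2.1,
    Summable.of_norm_bounded hu fun k => (hbnd k).2.2⟩

theorem stmt11' (b c ν ρ : ℂ) (hρ : 0 < ρ.re) (hc : 1 < c.re) (hν : 0 < ν.re)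
    (x : ℝ) (hx : 0 < x) :
    (2 - ν) * deriv (fun y : ℝ => unifiedG b (c - 1) (ν - 1) ρ (y:ℂ)) x +
        (x:ℝ) * (deriv (deriv (fun y : ℝ => unifiedG b (c - 1) (ν - 1) ρ (y:ℂ))) x +
          b * deriv (deriv (fun y : ℝ => unifiedG b (c - 1) (ν + 1) ρ (y:ℂ))) x) =
      -b * (ν + 2) * deriv (fun y : ℝ => unifiedG b (c - 1) (ν + 1) ρ (y:ℂ)) x := by
  obtain ⟨da1, da2⟩ := deriv_repr b c ν ρ hρ hc hν x hx (ν-1) (Or.inl rfl)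
  obtain ⟨db1, db2⟩ := deriv_repr b c ν ρ hρ hc hν x hx (ν+1) (Or.inr rfl)
  obtain ⟨sa1, sa2⟩ := summable_T1 b c ν ρ hρ hc hν x hx (ν-1) (Or.inl rfl)
  obtain ⟨sb1, sb2⟩ := summable_T1 b c ν ρ hρ hc hν x hx (ν+1) (Or.inr rfl)
  rw [da1, da2, db1, db2]
  have hC : (2-ν) * (∑' k, T1 b (c-1) ρ (ν-1) k x) + (x:ℂ) * (∑' k, T2 b (c-1) ρ (ν-1) k x)
      = ∑' k, ((2-ν) * T1 b (c-1) ρ (ν-1) k x + (x:ℂ) * T2 b (c-1) ρ (ν-1) k x) := by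
    rw [Summable.tsum_add (sa1.mul_left _) (sa2.mul_left _), tsum_mul_left, tsum_mul_left]
  have hD : -b*(ν+2) * (∑' k, T1 b (c-1) ρ (ν+1) k x) - (x:ℂ)*b * (∑' k, T2 b (c-1) ρ (ν+1) k x)
      = ∑' k, (-b*(ν+2) * T1 b (c-1) ρ (ν+1) k x - (x:ℂ)*b * T2 b (c-1) ρ (ν+1) k x) := by
    rw [Summable.tsum_sub (sb1.mul_left _) (sb2.mul_left _), tsum_mul_left, tsum_mul_left]
  have hshift : ∑' k, ((2-ν) * T1 b (c-1) ρ (ν-1) k x + (x:ℂ) * T2 b (c-1) ρ (ν-1) k x)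
      = ∑' k, ((2-ν) * T1 b (c-1) ρ (ν-1) (k+1) x + (x:ℂ) * T2 b (c-1) ρ (ν-1) (k+1) x) := by
    rw [Summable.tsum_eq_zero_add ((sa1.mul_left _).add (sa2.mul_left _))]
    rw [term_zero_identity b c ν ρ x hx, zero_add]
  have hcong : ∑' k, ((2-ν) * T1 b (c-1) ρ (ν-1) (k+1) x + (x:ℂ) * T2 b (c-1) ρ (ν-1) (k+1) x)
      = ∑' k, (-b*(ν+2) * T1 b (c-1) ρ (ν+1) k x - (x:ℂ)*b * T2 b (c-1) ρ (ν+1) k x) :=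
    tsum_congr fun k => term_identity b c ν ρ hν x hx k
  have key := (hC.trans (hshift.trans hcong)).trans hD.symm
  linear_combination key

theorem stmt11 (b c ν ρ : ℂ) (hρ : 0 < ρ.re) (hc : 1 < c.re) (hν : 0 < ν.re)
    (x : ℝ) (hx : 0 < x) :
    (2 - ν) * deriv (fun y : ℝ => unifiedG b (c - 1) (ν - 1) ρ (y:ℂ)) x +
        (x:ℂ) * (deriv (deriv (fun y : ℝ => unifiedG b (c - 1) (ν - 1) ρ (y:ℂ))) x +
          b * deriv (deriv (fun y : ℝ => unifiedG b (c - 1) (ν + 1) ρ (y:ℂ))) x) =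
      -b * (ν + 2) * deriv (fun y : ℝ => unifiedG b (c - 1) (ν + 1) ρ (y:ℂ)) x :=
  stmt11' b c ν ρ hρ hc hν x hx
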